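/- If G is a connected n-vertex graph with maximum degree at most 2 that is not isomorphic to any of P3, C3, C6, C7, or C11, then ι(G, P3) ≤ n/4. -/

import Mathlib

open SimpleGraph

/-- `G` contains a copy of the 3-vertex path as a (not necessarily induced) subgraph. -/
def containsP3 {V : Type*} (G : SimpleGraph V) : Prop :=
  ∃ f : Fin 3 → V, Function.Injective f ∧
    ∀ a b, (SimpleGraph.pathGraph 3).Adj a b → G.Adj (f a) (f b)

/-- The closed neighbourhood `N[D]` of a set of vertices `D`. -/
def closedNbhd {V : Type*} (G : SimpleGraph V) (D : Set V) : Set V :=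
  {v | v ∈ D ∨ ∃ d ∈ D, G.Adj d v}

/-- `D` is a `P3`-isolating set of `G`: `G - N[D]` contains no copy of `P3`. -/
def IsP3Isolating {V : Type*} (G : SimpleGraph V) (D : Set V) : Prop :=
  ¬ containsP3 (G.induce (closedNbhd G D)ᶜ)

/-- The `P3`-isolation number `ι(G, P3)`. -/
noncomputable def iotaP3 {V : Type*} (G : SimpleGraph V) : ℕ :=
  sInf {n | ∃ D : Finset V, D.card = n ∧ IsP3Isolating G ↑D}

namespace IsolP3Aux

variable {V : Type*} [Fintype V] [DecidableEq V] (G : SimpleGraph V) [DecidableRel G.Adj]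

/-- `f` enumerates an injective path with `k` vertices. -/
def HamP (k : ℕ) (f : ℕ → V) : Prop :=
  (∀ i < k, ∀ j < k, f i = f j → i = j) ∧ (∀ i, i + 1 < k → G.Adj (f i) (f (i + 1)))

lemma three_le_degree {v a b c : V} (hab : a ≠ b) (hac : a ≠ c) (hbc : b ≠ c)
    (h1 : G.Adj v a) (h2 : G.Adj v b) (h3 : G.Adj v c) : 3 ≤ G.degree v := by
  have hsub : ({a, b, c} : Finset V) ⊆ G.neighborFinset v := by
    intro x hx
    simp only [Finset.mem_insert, Finset.mem_singleton] at hx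
    rw [SimpleGraph.mem_neighborFinset]
    rcases hx with rfl | rfl | rfl <;> assumption
  have hcard : ({a, b, c} : Finset V).card = 3 := by
    rw [Finset.card_insert_of_notMem (by simp [hab, hac]),
      Finset.card_insert_of_notMem (by simp [hbc]), Finset.card_singleton]
  calc 3 = ({a, b, c} : Finset V).card := hcard.symm
    _ ≤ (G.neighborFinset v).card := Finset.card_le_card hsub

lemma cross {S : Set V} : ∀ {u w : V}, G.Walk u w → u ∈ S → w ∉ S →
    ∃ a ∈ S, ∃ b, b ∉ S ∧ G.Adj a b
  | _, _, SimpleGraph.Walk.nil, hu, hw => absurd hu hw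
  | u, w, SimpleGraph.Walk.cons (v := v) h p, hu, hw => by
    by_cases hv : v ∈ S
    · exact cross p hv hw
    · exact ⟨u, hu, v, hv, h⟩

lemma extend (hdeg : ∀ v, G.degree v ≤ 2) (hconn : G.Connected) {k : ℕ} {f : ℕ → V}
    (hk1 : 1 ≤ k) (hkn : k < Fintype.card V) (hf : HamP G k f) :
    ∃ g : ℕ → V, HamP G (k + 1) g := by
  obtain ⟨hinj, hadj⟩ := hf
  have hne : ∀ {x y : ℕ}, x < k → y < k → x ≠ y → f x ≠ f y := by
    intro x y hx hy hxy h
    exact hxy (hinj x hx y hy h)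
  set S : Finset V := (Finset.range k).image f with hS
  have hmem : ∀ {x : V}, x ∈ S ↔ ∃ i < k, f i = x := by
    intro x
    simp [hS]
  have hcard : S.card = k := by
    rw [hS, Finset.card_image_of_injOn, Finset.card_range]
    intro i hi j hj
    exact hinj i (by simpa using hi) j (by simpa using hj)
  have hex : ∃ w, w ∉ S := by
    by_contra h
    push_neg at h
    have : S = Finset.univ := Finset.eq_univ_iff_forall.2 h
    rw [this, Finset.card_univ] at hcard
    omega
  obtain ⟨w, hw⟩ := hex
  obtain ⟨wlk⟩ := hconn.preconnected (f 0) w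
  obtain ⟨a, ha, b, hb, hab⟩ :=
    cross G (S := ↑S) wlk (Finset.mem_coe.2 (hmem.2 ⟨0, hk1, rfl⟩)) (by simpa using hw)
  have hbS : b ∉ S := by simpa using hb
  obtain ⟨i, hik, rfl⟩ := hmem.1 (by simpa using ha)
  rcases Nat.eq_zero_or_pos i with rfl | hi0
  · -- extend at the front
    refine ⟨fun j => if j = 0 then b else f (j - 1), ?_, ?_⟩
    · intro x hx y hy hxy
      rcases Nat.eq_zero_or_pos x with rfl | hx0 <;> rcases Nat.eq_zero_or_pos y with rfl | hy0
      · rfl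
      · simp only [if_pos rfl, if_neg (by omega : y ≠ 0)] at hxy
        exact absurd (hmem.2 ⟨y - 1, by omega, hxy.symm⟩) hbS
      · simp only [if_pos rfl, if_neg (by omega : x ≠ 0)] at hxy
        exact absurd (hmem.2 ⟨x - 1, by omega, hxy⟩) hbS
      · simp only [if_neg (by omega : x ≠ 0), if_neg (by omega : y ≠ 0)] at hxy
        have := hinj (x - 1) (by omega) (y - 1) (by omega) hxy
        omega
    · intro j hj
      rcases Nat.eq_zero_or_pos j with rfl | hj0
      · simpa using hab.symm
      · simp only [if_neg (by omega : j ≠ 0), if_neg (by omega : j + 1 ≠ 0)]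
        have := hadj (j - 1) (by omega)
        have hjj : j - 1 + 1 = j := by omega
        rwa [hjj] at this
  rcases Nat.lt_or_ge (i + 1) k with hik1 | hik1
  · -- interior vertex: contradiction with degree
    exfalso
    have h1 : G.Adj (f i) (f (i - 1)) := by
      have := hadj (i - 1) (by omega)
      have hii : i - 1 + 1 = i := by omega
      rw [hii] at this
      exact this.symm
    have h2 : G.Adj (f i) (f (i + 1)) := hadj i hik1
    have h3 := three_le_degree G (v := f i) (a := f (i - 1)) (b := f (i + 1)) (c := b)
      (hne (by omega) (by omega) (by omega))
      (fun h => hbS (hmem.2 ⟨i - 1, by omega, h⟩))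
      (fun h => hbS (hmem.2 ⟨i + 1, by omega, h⟩)) h1 h2 hab
    have := hdeg (f i)
    omega
  · -- extend at the end; here i = k - 1
    have hik' : i = k - 1 := by omega
    refine ⟨fun j => if j = k then b else f j, ?_, ?_⟩
    · intro x hx y hy hxy
      rcases Nat.eq_or_lt_of_le (by omega : x ≤ k) with hx0 | hx0 <;>
        rcases Nat.eq_or_lt_of_le (by omega : y ≤ k) with hy0 | hy0
      · omega
      · simp only [if_pos hx0, if_neg (by omega : ¬ y = k)] at hxy
        exact absurd (hmem.2 ⟨y, by omega, hxy.symm⟩) hbS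
      · simp only [if_neg (by omega : ¬ x = k), if_pos hy0] at hxy
        exact absurd (hmem.2 ⟨x, by omega, hxy⟩) hbS
      · simp only [if_neg (by omega : ¬ x = k), if_neg (by omega : ¬ y = k)] at hxy
        exact hinj x hx0 y hy0 hxy
    · intro j hj
      rcases Nat.eq_or_lt_of_le (by omega : j + 1 ≤ k) with h' | hj0
      · have hjI : j = i := by omega
        simp only [if_neg (by omega : j ≠ k), h', if_pos rfl]
        rw [hjI]
        exact hab
      · simp only [if_neg (by omega : j ≠ k), if_neg (by omega : j + 1 ≠ k)]
        exact hadj j hj0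

lemma ham (hdeg : ∀ v, G.degree v ≤ 2) (hconn : G.Connected) :
    ∃ f : ℕ → V, HamP G (Fintype.card V) f := by
  have hV : Nonempty V := hconn.nonempty
  have hpos : 0 < Fintype.card V := Fintype.card_pos
  suffices h : ∀ k, 1 ≤ k → k ≤ Fintype.card V → ∃ f, HamP G k f by
    exact h _ hpos le_rfl
  intro k
  induction k with
  | zero => omega
  | succ k ih =>
    intro _ hk
    rcases Nat.eq_zero_or_pos k with rfl | hk1
    · refine ⟨fun _ => Classical.arbitrary V, fun i hi j hj _ => by omega, fun i hi => by omega⟩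
    · obtain ⟨f, hf⟩ := ih hk1 (by omega)
      exact extend G hdeg hconn hk1 (by omega) hf

lemma ham_surj {n : ℕ} {f : ℕ → V} (hn : n = Fintype.card V) (hf : HamP G n f) :
    ∀ v : V, ∃ i < n, f i = v := by
  intro v
  have hcard : ((Finset.range n).image f).card = n := by
    rw [Finset.card_image_of_injOn, Finset.card_range]
    intro i hi j hj hij
    exact hf.1 i (by simpa using hi) j (by simpa using hj) hij
  have huniv : (Finset.range n).image f = Finset.univ :=
    Finset.eq_univ_of_card _ (by rw [hcard, hn])
  have : v ∈ (Finset.range n).image f := huniv ▸ Finset.mem_univ v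
  obtain ⟨i, hi, hfi⟩ := Finset.mem_image.1 this
  exact ⟨i, by simpa using hi, hfi⟩

lemma edge_char (hdeg : ∀ v, G.degree v ≤ 2) {n : ℕ} {f : ℕ → V} (hf : HamP G n f)
    {i j : ℕ} (hi : i < n) (hj : j < n) (hij : i < j) (ha : G.Adj (f i) (f j)) :
    j = i + 1 ∨ (i = 0 ∧ j = n - 1) := by
  obtain ⟨hinj, hadj⟩ := hf
  have hne : ∀ {x y : ℕ}, x < n → y < n → x ≠ y → f x ≠ f y := by
    intro x y hx hy hxy h
    exact hxy (hinj x hx y hy h)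
  by_contra hcon
  push_neg at hcon
  obtain ⟨hji, hcon2⟩ := hcon
  have hdj := hdeg (f j)
  have hdi := hdeg (f i)
  have hj1 : j = n - 1 := by
    by_contra hjn
    have h1 : G.Adj (f j) (f (j - 1)) := by
      have := hadj (j - 1) (by omega)
      have hjj : j - 1 + 1 = j := by omega
      rw [hjj] at this
      exact this.symm
    have h2 : G.Adj (f j) (f (j + 1)) := by
      have := hadj j (by omega)
      exact this
    have := three_le_degree G (v := f j) (a := f (j - 1)) (b := f (j + 1)) (c := f i)
      (hne (by omega) (by omega) (by omega)) (hne (by omega) hi (by omega))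
      (hne (by omega) hi (by omega)) h1 h2 ha.symm
    omega
  subst hj1
  have hi0 : i ≠ 0 := fun h => (hcon2 h) rfl
  have h1 : G.Adj (f i) (f (i - 1)) := by
    have := hadj (i - 1) (by omega)
    have hii : i - 1 + 1 = i := by omega
    rw [hii] at this
    exact this.symm
  have h2 : G.Adj (f i) (f (i + 1)) := by
    have := hadj i (by omega)
    exact this
  have := three_le_degree G (v := f i) (a := f (i - 1)) (b := f (i + 1)) (c := f (n - 1))
    (hne (by omega) (by omega) (by omega)) (hne (by omega) (by omega) (by omega))
    (hne (by omega) (by omega) (by omega)) h1 h2 ha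
  omega

/-- symmetric version -/
lemma edge_char' (hdeg : ∀ v, G.degree v ≤ 2) {n : ℕ} {f : ℕ → V} (hf : HamP G n f)
    {i j : ℕ} (hi : i < n) (hj : j < n) (ha : G.Adj (f i) (f j)) :
    j = i + 1 ∨ i = j + 1 ∨ (i = 0 ∧ j = n - 1) ∨ (j = 0 ∧ i = n - 1) := by
  have hne : i ≠ j := by
    rintro rfl
    exact G.loopless.irrefl _ ha
  rcases Nat.lt_or_ge i j with h | h
  · rcases edge_char G hdeg hf hi hj h ha with h1 | h1
    · exact Or.inl h1
    · exact Or.inr (Or.inr (Or.inl h1))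
  · have h' : j < i := by omega
    rcases edge_char G hdeg hf hj hi h' ha.symm with h1 | h1
    · exact Or.inr (Or.inl h1)
    · exact Or.inr (Or.inr (Or.inr h1))

lemma p3_extract {D : Set V} (h : containsP3 (G.induce (closedNbhd G D)ᶜ)) :
    ∃ a b c : V, a ≠ c ∧ G.Adj a b ∧ G.Adj b c ∧
      a ∉ closedNbhd G D ∧ b ∉ closedNbhd G D ∧ c ∉ closedNbhd G D := by
  obtain ⟨g, hinj, hadj⟩ := h
  have h01 : (pathGraph 3).Adj 0 1 := by rw [SimpleGraph.pathGraph_adj]; decide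
  have h12 : (pathGraph 3).Adj 1 2 := by rw [SimpleGraph.pathGraph_adj]; decide
  have hac : ((g 0 : V)) ≠ (g 2 : V) := by
    intro h
    have : (0 : Fin 3) = 2 := hinj (Subtype.ext h)
    exact absurd this (by decide)
  exact ⟨g 0, g 1, g 2, hac, hadj 0 1 h01, hadj 1 2 h12, (g 0).2, (g 1).2, (g 2).2⟩

lemma mem_closed {D : Finset V} {n : ℕ} {f : ℕ → V}
    (hf2 : ∀ i, i + 1 < n → G.Adj (f i) (f (i + 1)))
    {p q : ℕ} (hp : f p ∈ D) (hq : q < n) (hpn : p < n)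
    (hpq : p = q ∨ p + 1 = q ∨ q + 1 = p) : f q ∈ closedNbhd G ↑D := by
  rcases hpq with rfl | h | h
  · exact Or.inl (by exact_mod_cast hp)
  · refine Or.inr ⟨f p, by exact_mod_cast hp, ?_⟩
    have := hf2 p (by omega)
    rwa [h] at this
  · refine Or.inr ⟨f p, by exact_mod_cast hp, ?_⟩
    have := (hf2 q (by omega)).symm
    rwa [h] at this

lemma window {m : ℕ} (p : ℕ → ℕ) (hm : 1 ≤ m) {i : ℕ} (h0 : p 0 ≤ i + 3)
    (hstep : ∀ k, k + 1 < m → p (k + 1) ≤ p k + 5)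
    (hlast : i ≤ p (m - 1) + 1) :
    ∃ k < m, i ≤ p k + 1 ∧ p k ≤ i + 3 := by
  classical
  have hex : ∃ k, i ≤ p k + 1 := ⟨m - 1, hlast⟩
  set k0 := Nat.find hex with hk0
  have hspec : i ≤ p k0 + 1 := Nat.find_spec hex
  have hk0le : k0 ≤ m - 1 := Nat.find_min' hex hlast
  have hk0m : k0 < m := by omega
  refine ⟨k0, hk0m, hspec, ?_⟩
  rcases Nat.eq_zero_or_pos k0 with h | h
  · rw [h]; exact h0
  · have hmin : ¬ i ≤ p (k0 - 1) + 1 := Nat.find_min hex (by omega)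
    have hst : p (k0 - 1 + 1) ≤ p (k0 - 1) + 5 := hstep _ (by omega)
    have : k0 - 1 + 1 = k0 := by omega
    rw [this] at hst
    omega


lemma mod_helper {n a b : ℕ} (hn : 2 ≤ n) (ha : a < n) (hb : b < n) :
    (n - b + a) % n = 1 ↔ (a = b + 1 ∨ (b = n - 1 ∧ a = 0)) := by
  rcases Nat.lt_or_ge (n - b + a) n with h | h
  · rw [Nat.mod_eq_of_lt h]; omega
  · rw [Nat.mod_eq_sub_mod h, Nat.mod_eq_of_lt (by omega)]; omega

lemma cyc_adj {n : ℕ} (hn : 2 ≤ n) (u v : Fin n) :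
    (cycleGraph n).Adj u v ↔
      ((u.val = v.val + 1 ∨ (v.val = n - 1 ∧ u.val = 0)) ∨
        (v.val = u.val + 1 ∨ (u.val = n - 1 ∧ v.val = 0))) := by
  rw [SimpleGraph.cycleGraph_adj', Fin.sub_def, Fin.sub_def]
  simp only []
  rw [mod_helper hn u.isLt v.isLt, mod_helper hn v.isLt u.isLt]

lemma cyc_iso {n : ℕ} {f : ℕ → V} (hn : n = Fintype.card V) (h3 : 3 ≤ n)
    (hdeg : ∀ v, G.degree v ≤ 2) (hf : HamP G n f) (hcyc : G.Adj (f 0) (f (n - 1))) :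
    Nonempty (G ≃g cycleGraph n) := by
  have hinj : Function.Injective (fun i : Fin n => f i.val) := by
    intro a b h
    exact Fin.ext (hf.1 a.val a.isLt b.val b.isLt h)
  have hsurj : Function.Surjective (fun i : Fin n => f i.val) := by
    intro v
    obtain ⟨i, hi, hfi⟩ := ham_surj G hn hf v
    exact ⟨⟨i, hi⟩, hfi⟩
  refine ⟨(SimpleGraph.Iso.symm ⟨Equiv.ofBijective _ ⟨hinj, hsurj⟩, ?_⟩)⟩
  intro a b
  show G.Adj (f a.val) (f b.val) ↔ (cycleGraph n).Adj a b
  rw [cyc_adj (by omega) a b]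
  constructor
  · intro h
    have := edge_char' G hdeg hf a.isLt b.isLt h
    omega
  · intro h
    rcases h with (h | ⟨h1, h2⟩) | (h | ⟨h1, h2⟩)
    · have hb1 : b.val + 1 < n := by omega
      have := (hf.2 b.val hb1).symm
      rwa [← h] at this
    · have := hcyc
      rw [← h2, ← h1] at this
      exact this
    · have ha1 : a.val + 1 < n := by omega
      have := hf.2 a.val ha1
      rwa [← h] at this
    · have := hcyc.symm
      rw [← h2, ← h1] at this
      exact this

lemma path3_iso {n : ℕ} {f : ℕ → V} (hn : n = Fintype.card V) (h3 : n = 3)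
    (hdeg : ∀ v, G.degree v ≤ 2) (hf : HamP G n f) (hne : ¬ G.Adj (f 0) (f (n - 1))) :
    Nonempty (G ≃g pathGraph 3) := by
  subst h3
  have hinj : Function.Injective (fun i : Fin 3 => f i.val) := by
    intro a b h
    exact Fin.ext (hf.1 a.val a.isLt b.val b.isLt h)
  have hsurj : Function.Surjective (fun i : Fin 3 => f i.val) := by
    intro v
    obtain ⟨i, hi, hfi⟩ := ham_surj G hn hf v
    exact ⟨⟨i, hi⟩, hfi⟩
  refine ⟨(SimpleGraph.Iso.symm ⟨Equiv.ofBijective _ ⟨hinj, hsurj⟩, ?_⟩)⟩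
  intro a b
  show G.Adj (f a.val) (f b.val) ↔ (pathGraph 3).Adj a b
  rw [SimpleGraph.pathGraph_adj]
  constructor
  · intro h
    have h2 : ¬ G.Adj (f 0) (f 2) := by
      have : (3 : ℕ) - 1 = 2 := by omega
      rwa [this] at hne
    rcases edge_char' G hdeg hf a.isLt b.isLt h with h1 | h1 | ⟨h1a, h1b⟩ | ⟨h1a, h1b⟩
    · omega
    · omega
    · exfalso
      have hb2 : (b : ℕ) = 2 := by omega
      rw [h1a, hb2] at h
      exact h2 h
    · exfalso
      have ha2 : (a : ℕ) = 2 := by omega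
      rw [h1a, ha2] at h
      exact h2 h.symm
  · intro h
    rcases h with h | h
    · have ha1 : a.val + 1 < 3 := by omega
      have := hf.2 a.val ha1
      rwa [h] at this
    · have hb1 : b.val + 1 < 3 := by omega
      have := (hf.2 b.val hb1).symm
      rwa [h] at this

lemma small (h : Fintype.card V < 3) : IsP3Isolating G (↑(∅ : Finset V)) := by
  rintro ⟨g, hinj, -⟩
  have h01 : (g 0 : V) ≠ (g 1 : V) := fun h =>
    absurd (hinj (Subtype.ext h)) (by decide)
  have h02 : (g 0 : V) ≠ (g 2 : V) := fun h =>
    absurd (hinj (Subtype.ext h)) (by decide)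
  have h12 : (g 1 : V) ≠ (g 2 : V) := fun h =>
    absurd (hinj (Subtype.ext h)) (by decide)
  have hcard : ({(g 0 : V), (g 1 : V), (g 2 : V)} : Finset V).card = 3 := by
    rw [Finset.card_insert_of_notMem (by simp [h01, h02]),
      Finset.card_insert_of_notMem (by simp [h12]), Finset.card_singleton]
  have := Finset.card_le_univ ({(g 0 : V), (g 1 : V), (g 2 : V)} : Finset V)
  rw [hcard] at this
  omega

lemma path_case {n : ℕ} {f : ℕ → V} (hn : n = Fintype.card V)
    (hdeg : ∀ v, G.degree v ≤ 2) (hf : HamP G n f)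
    (hne : ¬ G.Adj (f 0) (f (n - 1))) (h4 : 4 ≤ n) :
    ∃ D : Finset V, D.card ≤ n / 4 ∧ IsP3Isolating G ↑D := by
  set m := n / 4 with hm
  set T := min (n % 4) (m - 1) with hT
  set p : ℕ → ℕ := fun k => 3 + 4 * k + min k T with hp
  have hm1 : 1 ≤ m := by omega
  refine ⟨(Finset.range m).image (fun k => f (p k)), ?_, ?_⟩
  · exact le_trans Finset.card_image_le (by simp)
  · intro hcon
    obtain ⟨a, b, c, hac, hab, hbc, hua, hub, huc⟩ := p3_extract G hcon
    obtain ⟨ia, hia, rfl⟩ := ham_surj G hn hf a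
    obtain ⟨ib, hib, rfl⟩ := ham_surj G hn hf b
    obtain ⟨ic, hic, rfl⟩ := ham_surj G hn hf c
    have hwrap : ∀ {x y : ℕ}, x = 0 → y = n - 1 → G.Adj (f x) (f y) → False := by
      intro x y hx hy h
      rw [hx, hy] at h
      exact hne h
    have h1 : ia + 1 = ib ∨ ib + 1 = ia := by
      rcases edge_char' G hdeg hf hia hib hab with h | h | ⟨h1, h2⟩ | ⟨h1, h2⟩
      · omega
      · omega
      · exact absurd hab (fun h' => hwrap h1 h2 h')
      · exact absurd hab.symm (fun h' => hwrap h1 h2 h')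
    have h2 : ic + 1 = ib ∨ ib + 1 = ic := by
      rcases edge_char' G hdeg hf hib hic hbc with h | h | ⟨h1, h2⟩ | ⟨h1, h2⟩
      · omega
      · omega
      · exact absurd hbc (fun h' => hwrap h1 h2 h')
      · exact absurd hbc.symm (fun h' => hwrap h1 h2 h')
    have hneac : ia ≠ ic := fun h => hac (by rw [h])
    obtain ⟨x, y, hxv, hyv, hux, huy, hyn⟩ :
        ∃ x y, x + 1 = ib ∧ ib + 1 = y ∧ f x ∉ closedNbhd G
          ↑((Finset.range m).image (fun k => f (p k))) ∧
          f y ∉ closedNbhd G ↑((Finset.range m).image (fun k => f (p k))) ∧ y < n := by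
      rcases h1 with h1 | h1 <;> rcases h2 with h2 | h2
      · omega
      · exact ⟨ia, ic, h1, h2, hua, huc, hic⟩
      · exact ⟨ic, ia, h2, h1, huc, hua, hia⟩
      · omega
    have hib1 : 1 ≤ ib := by omega
    have hibn : ib + 1 < n := by omega
    obtain ⟨k, hk, hw1, hw2⟩ := window p hm1 (i := ib - 1)
      (by simp only [hp]; omega)
      (by intro k hk; simp only [hp]; omega)
      (by simp only [hp]; omega)
    have hpk_lt : p k < n := by
      have hkm : k ≤ m - 1 := by omega
      simp only [hp]
      omega
    have hpkD : f (p k) ∈ (Finset.range m).image (fun k => f (p k)) :=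
      Finset.mem_image.2 ⟨k, Finset.mem_range.2 hk, rfl⟩
    have hcases : p k + 2 = ib ∨ p k + 1 = ib ∨ p k = ib ∨ p k = ib + 1 ∨ p k = ib + 2 := by
      omega
    rcases hcases with h | h | h | h | h
    · exact hux (mem_closed G hf.2 hpkD (by omega) hpk_lt (Or.inr (Or.inl (by omega))))
    · exact hux (mem_closed G hf.2 hpkD (by omega) hpk_lt (Or.inl (by omega)))
    · exact hub (mem_closed G hf.2 hpkD (by omega) hpk_lt (Or.inl (by omega)))
    · exact huy (mem_closed G hf.2 hpkD (q := y) (by omega) hpk_lt (Or.inl (by omega)))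
    · exact huy (mem_closed G hf.2 hpkD (q := y) (by omega) hpk_lt (Or.inr (Or.inr (by omega))))

lemma cycle_case {n : ℕ} {f : ℕ → V} (hn : n = Fintype.card V)
    (hdeg : ∀ v, G.degree v ≤ 2) (hf : HamP G n f)
    (hcyc : G.Adj (f 0) (f (n - 1))) (h4 : 4 ≤ n) (ht : n % 4 ≤ n / 4) :
    ∃ D : Finset V, D.card ≤ n / 4 ∧ IsP3Isolating G ↑D := by
  set m := n / 4 with hm
  set t := n % 4 with htdef
  set p : ℕ → ℕ := fun k => 1 + 4 * k + min (k + 1) t with hp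
  have hm1 : 1 ≤ m := by omega
  refine ⟨(Finset.range m).image (fun k => f (p k)), ?_, ?_⟩
  · exact le_trans Finset.card_image_le (by simp)
  · intro hcon
    obtain ⟨a, b, c, hac, hab, hbc, hua, hub, huc⟩ := p3_extract G hcon
    obtain ⟨ia, hia, rfl⟩ := ham_surj G hn hf a
    obtain ⟨ib, hib, rfl⟩ := ham_surj G hn hf b
    obtain ⟨ic, hic, rfl⟩ := ham_surj G hn hf c
    have hneac : ia ≠ ic := fun h => hac (by rw [h])
    -- P z: z is the cyclic predecessor of ib; Q z: z is the cyclic successor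
    have hclass : ∀ {z : ℕ}, z < n → G.Adj (f z) (f ib) →
        ((z + 1 = ib ∨ (ib = 0 ∧ z = n - 1)) ∨ (ib + 1 = z ∨ (z = 0 ∧ ib = n - 1))) := by
      intro z hz h
      rcases edge_char' G hdeg hf hz hib h with h' | h' | ⟨h1, h2⟩ | ⟨h1, h2⟩
      · exact Or.inl (Or.inl (by omega))
      · exact Or.inr (Or.inl (by omega))
      · exact Or.inr (Or.inr ⟨h1, h2⟩)
      · exact Or.inl (Or.inr ⟨h1, h2⟩)
    have hA := hclass hia hab
    have hC := hclass hic hbc.symm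
    -- one of ia, ic is the predecessor and the other the successor
    obtain ⟨x, y, hxP, hyQ, hux, huy, hxn, hyn⟩ :
        ∃ x y, (x + 1 = ib ∨ (ib = 0 ∧ x = n - 1)) ∧ (ib + 1 = y ∨ (y = 0 ∧ ib = n - 1)) ∧
          f x ∉ closedNbhd G ↑((Finset.range m).image (fun k => f (p k))) ∧
          f y ∉ closedNbhd G ↑((Finset.range m).image (fun k => f (p k))) ∧
          x < n ∧ y < n := by
      rcases hA with hA | hA <;> rcases hC with hC | hC
      · omega
      · exact ⟨ia, ic, hA, hC, hua, huc, hia, hic⟩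
      · exact ⟨ic, ia, hC, hA, huc, hua, hic, hia⟩
      · omega
    have hplast : p (m - 1) = n - 3 := by
      simp only [hp]
      omega
    have hpkD : ∀ k, k < m → f (p k) ∈ (Finset.range m).image (fun k => f (p k)) :=
      fun k hk => Finset.mem_image.2 ⟨k, Finset.mem_range.2 hk, rfl⟩
    rcases Nat.eq_zero_or_pos ib with hib0 | hib1
    · -- ib = 0 : neighbours are n-1 and 1
      have hx' : x = n - 1 := by omega
      have hy' : y = 1 := by omega
      have hp0 : p 0 = 1 + min 1 t := by simp [hp]
      refine huy (mem_closed G hf.2 (hpkD 0 hm1) (by omega) (by omega) ?_)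
      omega
    rcases Nat.lt_or_ge ib (n - 1) with hibn | hibn
    · -- 1 ≤ ib ≤ n - 2 : neighbours are ib - 1 and ib + 1
      have hx' : x + 1 = ib := by omega
      have hy' : y = ib + 1 := by omega
      obtain ⟨k, hk, hw1, hw2⟩ := window p hm1 (i := ib - 1)
        (by simp only [hp]; omega)
        (by intro k hk; simp only [hp]; omega)
        (by rw [hplast]; omega)
      have hpk_lt : p k < n := by
        have hkm : k ≤ m - 1 := by omega
        simp only [hp]
        omega
      have hD := hpkD k hk
      have hcases : p k + 2 = ib ∨ p k + 1 = ib ∨ p k = ib ∨ p k = ib + 1 ∨ p k = ib + 2 := by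
        omega
      rcases hcases with h | h | h | h | h
      · exact hux (mem_closed G hf.2 hD (by omega) hpk_lt (Or.inr (Or.inl (by omega))))
      · exact hux (mem_closed G hf.2 hD (by omega) hpk_lt (Or.inl (by omega)))
      · exact hub (mem_closed G hf.2 hD (by omega) hpk_lt (Or.inl (by omega)))
      · exact huy (mem_closed G hf.2 hD (q := y) (by omega) hpk_lt (Or.inl (by omega)))
      · exact huy (mem_closed G hf.2 hD (q := y) (by omega) hpk_lt (Or.inr (Or.inr (by omega))))
    · -- ib = n - 1 : neighbours are n - 2 and 0
      have hib' : ib = n - 1 := by omega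
      have hx' : x = n - 2 := by omega
      refine hux (mem_closed G hf.2 (hpkD (m - 1) (by omega)) (by omega) (by omega) ?_)
      omega

lemma main (hconn : G.Connected) (hdeg : ∀ v, G.degree v ≤ 2)
    (h3 : ¬ Nonempty (G ≃g SimpleGraph.pathGraph 3))
    (hc3 : ¬ Nonempty (G ≃g SimpleGraph.cycleGraph 3))
    (hc6 : ¬ Nonempty (G ≃g SimpleGraph.cycleGraph 6))
    (hc7 : ¬ Nonempty (G ≃g SimpleGraph.cycleGraph 7))
    (hc11 : ¬ Nonempty (G ≃g SimpleGraph.cycleGraph 11)) :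
    iotaP3 G ≤ Fintype.card V / 4 := by
  obtain ⟨n, hn⟩ : ∃ n, n = Fintype.card V := ⟨_, rfl⟩
  rw [← hn]
  rcases Nat.lt_or_ge n 3 with hsmall | h3n
  · have h0 : iotaP3 G ≤ 0 :=
      Nat.sInf_le ⟨∅, Finset.card_empty, small G (by omega)⟩
    omega
  · obtain ⟨f, hf⟩ := ham G hdeg hconn
    rw [← hn] at hf
    by_cases hcyc : G.Adj (f 0) (f (n - 1))
    · have hiso := cyc_iso G hn h3n hdeg hf hcyc
      have hne3 : n ≠ 3 := fun h => hc3 (h ▸ hiso)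
      have hne6 : n ≠ 6 := fun h => hc6 (h ▸ hiso)
      have hne7 : n ≠ 7 := fun h => hc7 (h ▸ hiso)
      have hne11 : n ≠ 11 := fun h => hc11 (h ▸ hiso)
      obtain ⟨D, hD, hisol⟩ := cycle_case G hn hdeg hf hcyc (by omega) (by omega)
      exact le_trans (Nat.sInf_le ⟨D, rfl, hisol⟩) hD
    · rcases Nat.eq_or_lt_of_le h3n with h3' | h4'
      · exact absurd (path3_iso G hn h3'.symm hdeg hf hcyc) h3
      · obtain ⟨D, hD, hisol⟩ := path_case G hn hdeg hf hcyc (by omega)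
        exact le_trans (Nat.sInf_le ⟨D, rfl, hisol⟩) hD

end IsolP3Aux


theorem stmt6 {V : Type*} [Fintype V] [DecidableEq V] (G : SimpleGraph V)
    [DecidableRel G.Adj] (hconn : G.Connected) (hdeg : ∀ v, G.degree v ≤ 2)
    (h3 : ¬ Nonempty (G ≃g SimpleGraph.pathGraph 3))
    (hc3 : ¬ Nonempty (G ≃g SimpleGraph.cycleGraph 3))
    (hc6 : ¬ Nonempty (G ≃g SimpleGraph.cycleGraph 6))
    (hc7 : ¬ Nonempty (G ≃g SimpleGraph.cycleGraph 7))
    (hc11 : ¬ Nonempty (G ≃g SimpleGraph.cycleGraph 11)) :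
    (iotaP3 G : ℝ) ≤ (Fintype.card V : ℝ) / 4 := by
  have h := IsolP3Aux.main G hconn hdeg h3 hc3 hc6 hc7 hc11
  calc (iotaP3 G : ℝ) ≤ ((Fintype.card V / 4 : ℕ) : ℝ) := by exact_mod_cast h
    _ ≤ (Fintype.card V : ℝ) / 4 := Nat.cast_div_le
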